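/- Let D₁, D be discriminant forms, H ⊆ D₁ ⊕ D a horizontal isotropic subgroup with projections H₁ ⊆ D₁ and H_D ⊆ D, and let I ⊆ D be an isotropic subgroup. Suppose K₁ ⊆ D₁ contains H₁^⊥ and admits a lift into H^⊥ ⊆ D₁ ⊕ D (a homomorphism K₁ → H^⊥ whose composition with projection to D₁ is the identity) preserving the ℚ/ℤ-quadratic values and such that the composition with the projection to H^⊥/H is injective. Then the induced map κ: K₁/H₁^⊥ → D is injective, its image I is an isotropic subgroup satisfying I ∩ H_D = I ∩ H_D^⊥ = {0}, and K₁ = ((H ∩ I^⊥)₁)^⊥, the perpendicular in D₁ of the D₁-projection of H ∩ I^⊥. -/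

import Mathlib

private lemma addCircle_exists_int_smul {n : ℕ} (hn : n ≠ 0) (a : AddCircle (1 : ℚ))
    (ha : n • a = 0) : ∃ m : ℤ, a = m • ((((n : ℚ))⁻¹ : ℚ) : AddCircle (1 : ℚ)) := by
  obtain ⟨q, rfl⟩ := QuotientAddGroup.mk_surjective a
  have : ((n • q : ℚ) : AddCircle (1 : ℚ)) = 0 := by
    rw [← ha]; push_cast [AddCircle.coe_nsmul]; ring_nf
  rw [AddCircle.coe_eq_zero_iff] at this
  obtain ⟨m, hm⟩ := this
  refine ⟨m, ?_⟩
  have hq : q = m • ((n : ℚ))⁻¹ := by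
    rw [zsmul_eq_mul, nsmul_eq_mul] at hm
    rw [zsmul_eq_mul]
    have : (n:ℚ) ≠ 0 := by exact_mod_cast hn
    field_simp
    linarith
  rw [hq, ← AddCircle.coe_zsmul]

private instance addCircleRoots (n : ℕ) [NeZero n] :
    HasEnoughRootsOfUnity (Multiplicative (AddCircle (1 : ℚ))) n := by
  haveI : Fact ((0 : ℚ) < 1) := ⟨one_pos⟩
  set M := Multiplicative (AddCircle (1 : ℚ))
  have hn : (n : ℚ) ≠ 0 := Nat.cast_ne_zero.mpr (NeZero.ne n)
  set ζ : M := Multiplicative.ofAdd ((((n : ℚ))⁻¹ : ℚ) : AddCircle (1 : ℚ)) with hζ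
  have hord : orderOf ζ = n := by
    rw [hζ, orderOf_ofAdd_eq_addOrderOf]
    have := AddCircle.addOrderOf_period_div (p := (1 : ℚ)) (n := n) (Nat.pos_of_ne_zero (NeZero.ne n))
    rwa [one_div] at this
  have hprim : IsPrimitiveRoot ζ n := hord ▸ IsPrimitiveRoot.orderOf ζ
  have hg : (toUnits ζ) ∈ rootsOfUnity n M := by
    rw [mem_rootsOfUnity, ← map_pow]
    have : ζ ^ n = 1 := hprim.pow_eq_one
    rw [this, map_one]
  refine ⟨⟨ζ, hprim⟩, ⟨⟨⟨toUnits ζ, hg⟩, fun x => ?_⟩⟩⟩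
  have hx : ((x : Mˣ) : M) ^ n = 1 := by
    have := x.2; rw [mem_rootsOfUnity] at this
    rw [← Units.val_pow_eq_pow_val, this, Units.val_one]
  have hx' : n • (Multiplicative.toAdd ((x : Mˣ) : M)) = 0 := by
    have : Multiplicative.toAdd (((x : Mˣ) : M) ^ n) = n • Multiplicative.toAdd ((x : Mˣ) : M) := rfl
    rw [← this, hx]; rfl
  obtain ⟨m, hm⟩ := addCircle_exists_int_smul (NeZero.ne n) _ hx'
  refine ⟨m, ?_⟩
  apply Subtype.ext
  show (toUnits ζ) ^ m = (x : Mˣ)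
  rw [← map_zpow]
  have : ζ ^ m = ((x : Mˣ) : M) := by
    have : Multiplicative.toAdd (ζ ^ m) = m • ((((n : ℚ))⁻¹ : ℚ) : AddCircle (1 : ℚ)) := rfl
    apply Multiplicative.toAdd.injective
    rw [this, ← hm]
  rw [this, toUnits_val_apply]

private lemma equivAddChar (A : Type*) [AddCommGroup A] [Finite A] :
    Nonempty ((A →+ AddCircle (1 : ℚ)) ≃ A) := by
  set M := Multiplicative (AddCircle (1 : ℚ))
  set G := Multiplicative A
  haveI : Finite G := inferInstanceAs (Finite A)
  haveI : NeZero (Monoid.exponent G) := ⟨Monoid.exponent_ne_zero_of_finite⟩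
  obtain ⟨e⟩ := CommGroup.monoidHom_mulEquiv_of_hasEnoughRootsOfUnity G M
  have e1 : (A →+ AddCircle (1 : ℚ)) ≃ (G →* M) := AddMonoidHom.toMultiplicative
  have e2 : (G →* M) ≃* (G →* Mˣ) := MulEquiv.monoidHomCongrRight toUnits
  exact ⟨e1.trans (e2.toEquiv.trans e.toEquiv)⟩

private lemma perp_perp {A : Type*} [AddCommGroup A] [Finite A]
    (b : A → A → AddCircle (1 : ℚ))
    (badd : ∀ x y z : A, b (x + y) z = b x z + b y z)
    (bsymm : ∀ x y : A, b x y = b y x)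
    (hnd : ∀ x : A, (∀ y : A, b x y = 0) → x = 0)
    (P : AddSubgroup A) (x : A)
    (hx : ∀ y : A, (∀ p ∈ P, b y p = 0) → b x y = 0) : x ∈ P := by
  have bzero : ∀ z : A, b 0 z = 0 := by
    intro z
    have h := badd 0 0 z
    rw [add_zero] at h
    exact right_eq_add.mp h
  have bzero' : ∀ z : A, b z 0 = 0 := fun z => (bsymm z 0).trans (bzero z)
  have badd' : ∀ x y z : A, b x (y + z) = b x y + b x z := by
    intro a y z; rw [bsymm, badd, bsymm y a, bsymm z a]
  let β : A →+ (A →+ AddCircle (1 : ℚ)) :=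
    AddMonoidHom.mk' (fun y => AddMonoidHom.mk' (fun z => b y z) (badd' y))
      (fun y y' => AddMonoidHom.ext fun z => badd y y' z)
  have hβinj : Function.Injective β := by
    rw [injective_iff_map_eq_zero]
    intro a ha
    exact hnd a fun z => AddMonoidHom.ext_iff.mp ha z
  obtain ⟨E⟩ := equivAddChar A
  haveI : Finite (A →+ AddCircle (1 : ℚ)) := Finite.of_equiv A E.symm
  have hβsurj : Function.Surjective β := by
    have := (Nat.bijective_iff_injective_and_card β).mpr ⟨hβinj, (Nat.card_congr E).symm⟩
    exact this.surjective
  by_contra hxP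
  have hne : (QuotientAddGroup.mk' P x) ≠ 0 := by
    simpa [QuotientAddGroup.eq_zero_iff] using hxP
  obtain ⟨c, hc⟩ := CharacterModule.exists_character_apply_ne_zero_of_ne_zero hne
  obtain ⟨y, hy⟩ := hβsurj ((c : (A ⧸ P) →+ AddCircle (1 : ℚ)).comp (QuotientAddGroup.mk' P))
  have hyP : ∀ p ∈ P, b y p = 0 := by
    intro p hp
    have : β y p = c (QuotientAddGroup.mk' P p) := by rw [hy]; rfl
    rw [show b y p = β y p from rfl, this,
      show (QuotientAddGroup.mk' P) p = 0 from (QuotientAddGroup.eq_zero_iff p).mpr hp, map_zero]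
  have h1 : b x y = 0 := hx y hyP
  have h2 : b y x = c (QuotientAddGroup.mk' P x) := by
    rw [show b y x = β y x from rfl, hy]; rfl
  rw [bsymm, h2] at h1
  exact hc h1



/-- Let `D₁ ⊕ D` be an orthogonal direct sum of discriminant forms,
`H = {(γ, ι γ) : γ ∈ H₁}` a horizontal isotropic subgroup with projections
`H₁ ⊆ D₁` and `H_D = ι(H₁) ⊆ D`.  Suppose `K₁ ⊆ D₁` contains `H₁^⊥` and admits
a lift `δ ↦ (δ, κ δ)` into `H^⊥ ⊆ D₁ × D` (so the composition with the
projection to `D₁` is the identity), with `κ` vanishing on `H₁^⊥`, preserving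
the `ℚ/ℤ`-quadratic values, and such that the composition with the projection
to `H^⊥/H` is injective.  Then the induced map `κ : K₁/H₁^⊥ → D` is injective,
its image `I` is an isotropic subgroup with `I ∩ H_D = I ∩ H_D^⊥ = {0}`, and
`K₁ = ((H ∩ I^⊥)₁)^⊥`, the perpendicular in `D₁` of the `D₁`-projection of
`H ∩ I^⊥`. -/
theorem extension_of_perp_subgroup
    (D₁ D : Type*) [AddCommGroup D₁] [AddCommGroup D] [Finite D₁] [Finite D]
    (q₁ : D₁ → AddCircle (1 : ℚ)) (q : D → AddCircle (1 : ℚ))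
    (b₁ : D₁ → D₁ → AddCircle (1 : ℚ)) (b : D → D → AddCircle (1 : ℚ))
    (hbq₁ : ∀ x y : D₁, b₁ x y = q₁ (x + y) - q₁ x - q₁ y)
    (hbq : ∀ x y : D, b x y = q (x + y) - q x - q y)
    (hadd₁ : ∀ x y z : D₁, b₁ (x + y) z = b₁ x z + b₁ y z)
    (hadd : ∀ x y z : D, b (x + y) z = b x z + b y z)
    (hnd₁ : ∀ x : D₁, (∀ y : D₁, b₁ x y = 0) → x = 0)
    (hnd : ∀ x : D, (∀ y : D, b x y = 0) → x = 0)
    (H₁ : AddSubgroup D₁) (ι : ↥H₁ →+ D) (hι : Function.Injective ι)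
    (hiso : ∀ γ : ↥H₁, q₁ (γ : D₁) + q (ι γ) = 0)
    (K₁ : AddSubgroup D₁)
    (hK₁ : ∀ x : D₁, (∀ γ : ↥H₁, b₁ x (γ : D₁) = 0) → x ∈ K₁)
    (κ : ↥K₁ →+ D)
    (hκ0 : ∀ δ : ↥K₁, (∀ γ : ↥H₁, b₁ (δ : D₁) (γ : D₁) = 0) → κ δ = 0)
    (hlift : ∀ δ : ↥K₁, ∀ γ : ↥H₁, b₁ (δ : D₁) (γ : D₁) + b (κ δ) (ι γ) = 0)
    (hqpres : ∀ δ : ↥K₁, q₁ (δ : D₁) + q (κ δ) = q₁ (δ : D₁))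
    (hinj : ∀ δ : ↥K₁, (∃ γ : ↥H₁, (δ : D₁) = (γ : D₁) ∧ κ δ = ι γ) → (δ : D₁) = 0) :
    (∀ δ : ↥K₁, κ δ = 0 → (∀ γ : ↥H₁, b₁ (δ : D₁) (γ : D₁) = 0)) ∧
    (∀ δ : ↥K₁, q (κ δ) = 0) ∧
    (∀ δ : ↥K₁, (∃ γ : ↥H₁, κ δ = ι γ) → κ δ = 0) ∧
    (∀ δ : ↥K₁, (∀ γ : ↥H₁, b (κ δ) (ι γ) = 0) → κ δ = 0) ∧
    ((K₁ : Set D₁) =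
      {x : D₁ | ∀ γ : ↥H₁, (∀ δ : ↥K₁, b (ι γ) (κ δ) = 0) → b₁ x (γ : D₁) = 0}) := by
  -- basic bilinearity facts
  have bsym₁ : ∀ x y : D₁, b₁ x y = b₁ y x := by
    intro x y; rw [hbq₁, hbq₁, add_comm x y]; abel
  have bsym : ∀ x y : D, b x y = b y x := by
    intro x y; rw [hbq, hbq, add_comm x y]; abel
  have bzero : ∀ z : D, b 0 z = 0 := by
    intro z
    have h := hadd 0 0 z
    rw [add_zero] at h
    exact right_eq_add.mp h
  have bzero₁ : ∀ z : D₁, b₁ 0 z = 0 := by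
    intro z
    have h := hadd₁ 0 0 z
    rw [add_zero] at h
    exact right_eq_add.mp h
  have bsub₁ : ∀ x y z : D₁, b₁ (x - y) z = b₁ x z - b₁ y z := by
    intro x y z
    have h := hadd₁ (x - y) y z
    rw [sub_add_cancel] at h
    rw [eq_sub_iff_add_eq, ← h]
  -- polarization of the isotropy of H
  have hpolar : ∀ γ γ' : ↥H₁, b₁ (γ : D₁) (γ' : D₁) + b (ι γ) (ι γ') = 0 := by
    intro γ γ'
    have h1 := hiso γ
    have h2 := hiso γ'
    have h3 := hiso (γ + γ')
    rw [map_add] at h3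
    have hc : ((γ + γ' : ↥H₁) : D₁) = (γ : D₁) + (γ' : D₁) := rfl
    rw [hc] at h3
    rw [hbq₁, hbq]
    have e1 : q (ι γ) = -q₁ (γ : D₁) := eq_neg_of_add_eq_zero_right h1
    have e2 : q (ι γ') = -q₁ (γ' : D₁) := eq_neg_of_add_eq_zero_right h2
    have e3 : q (ι γ + ι γ') = -q₁ ((γ : D₁) + (γ' : D₁)) := eq_neg_of_add_eq_zero_right
      (by rw [add_comm (q₁ _)] at h3; rwa [add_comm])
    rw [e1, e2, e3]
    abel
  -- (1)
  refine ⟨?_, ?_, ?_, ?_, ?_⟩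
  · intro δ h γ
    have hl := hlift δ γ
    rw [h, bzero, add_zero] at hl
    exact hl
  -- (2)
  · intro δ
    exact add_eq_left.mp (hqpres δ)
  -- (3)
  · rintro δ ⟨γ, hγ⟩
    have hδγ : ∀ γ' : ↥H₁, b₁ ((δ : D₁) - (γ : D₁)) (γ' : D₁) = 0 := by
      intro γ'
      rw [bsub₁]
      have hl := hlift δ γ'
      rw [hγ] at hl
      have hp := hpolar γ γ'
      have : b₁ (δ : D₁) (γ' : D₁) = b₁ (γ : D₁) (γ' : D₁) := by
        have e1 : b₁ (δ : D₁) (γ' : D₁) = -b (ι γ) (ι γ') := eq_neg_of_add_eq_zero_left hl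
        have e2 : b₁ (γ : D₁) (γ' : D₁) = -b (ι γ) (ι γ') := eq_neg_of_add_eq_zero_left hp
        rw [e1, e2]
      rw [this, sub_self]
    have hmem : (δ : D₁) - (γ : D₁) ∈ K₁ := hK₁ _ hδγ
    have γmem : (γ : D₁) ∈ K₁ := by
      have : (γ : D₁) = (δ : D₁) - ((δ : D₁) - (γ : D₁)) := (sub_sub_cancel _ _).symm
      rw [this]
      exact K₁.sub_mem δ.2 hmem
    set γK : ↥K₁ := ⟨(γ : D₁), γmem⟩ with hγK
    set εK : ↥K₁ := ⟨(δ : D₁) - (γ : D₁), hmem⟩ with hεK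
    have hδeq : δ = εK + γK := by
      apply Subtype.ext
      show (δ : D₁) = (δ : D₁) - (γ : D₁) + (γ : D₁)
      abel
    have hκε : κ εK = 0 := hκ0 εK hδγ
    have hκγK : κ γK = κ δ := by rw [hδeq, map_add, hκε, zero_add]
    have hzero : (γK : D₁) = 0 := hinj γK ⟨γ, rfl, by rw [hκγK, hγ]⟩
    have hγ0 : γ = 0 := by
      apply hι
      rw [map_zero]
      have hγ0' : (γ : D₁) = 0 := hzero
      have : γ = (0 : ↥H₁) := Subtype.ext hγ0'
      rw [this, map_zero]
    rw [hγ, hγ0, map_zero]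
  -- (4)
  · intro δ h
    apply hκ0
    intro γ
    have hl := hlift δ γ
    rw [h γ, add_zero] at hl
    exact hl
  -- (5)
  · ext x
    simp only [SetLike.mem_coe, Set.mem_setOf_eq]
    constructor
    · intro hx γ hγ
      have hl := hlift ⟨x, hx⟩ γ
      have : b (κ ⟨x, hx⟩) (ι γ) = 0 := by rw [bsym]; exact hγ ⟨x, hx⟩
      rw [this, add_zero] at hl
      exact hl
    · intro hx
      apply perp_perp b₁ hadd₁ bsym₁ hnd₁ K₁ x
      intro y hy
      have hyH : y ∈ H₁ := by
        apply perp_perp b₁ hadd₁ bsym₁ hnd₁ H₁ y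
        intro z hz
        have hzK : z ∈ K₁ := hK₁ z fun γ => hz (γ : D₁) γ.2
        exact hy z hzK
      set γ : ↥H₁ := ⟨y, hyH⟩ with hγdef
      have hkey : ∀ δ : ↥K₁, b (ι γ) (κ δ) = 0 := by
        intro δ
        have hl := hlift δ γ
        have hb₁ : b₁ (δ : D₁) (γ : D₁) = 0 := by
          rw [bsym₁]
          exact hy (δ : D₁) δ.2
        rw [hb₁, zero_add] at hl
        rw [bsym]
        exact hl
      exact hx γ hkey
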